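/- For θ ∈ (0,π) and x ∈ ℝ, the function f_θ(x) = (1/(2i)) · log((1 - e^{x - iθ}) / (1 - e^{x + iθ})) (with branch chosen so that 0 < f_θ(x) < π) has derivative f_θ'(x) = sin θ / (2(cosh x - cos θ)), which is strictly positive; hence f_θ is strictly increasing. -/

import Mathlib

open Real

/-- For `θ ∈ (0,π)`, the function
`f_θ(x) = (1/(2i))·log((1 - e^{x-iθ})/(1 - e^{x+iθ}))`, with the branch of the logarithm
chosen so that `0 < f_θ(x) < π` (encoded by the conditions `exp(2·i·f θ x) = ratio` and
`f x ∈ (0,π)`), has derivative `f_θ'(x) = sin θ / (2(cosh x - cos θ)) > 0`;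
hence `f_θ` is strictly increasing. -/
theorem circle_pattern_f_deriv_pos_strictMono
    (θ : ℝ) (hθ : θ ∈ Set.Ioo 0 Real.pi) (f : ℝ → ℝ)
    (hrange : ∀ x, f x ∈ Set.Ioo 0 Real.pi)
    (hbranch : ∀ x : ℝ,
      Complex.exp (2 * Complex.I * (f x : ℂ)) =
        (1 - Complex.exp ((x : ℂ) - (θ : ℂ) * Complex.I)) /
          (1 - Complex.exp ((x : ℂ) + (θ : ℂ) * Complex.I))) :
    (∀ x : ℝ, HasDerivAt f (Real.sin θ / (2 * (Real.cosh x - Real.cos θ))) x) ∧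
    (∀ x : ℝ, 0 < Real.sin θ / (2 * (Real.cosh x - Real.cos θ))) ∧
    StrictMono f := by
  obtain ⟨hθ0, hθπ⟩ := hθ
  have hs : 0 < Real.sin θ := Real.sin_pos_of_pos_of_lt_pi hθ0 hθπ
  have hc1 : Real.cos θ < 1 := by nlinarith [Real.sin_sq_add_cos_sq θ]
  have hcosh : ∀ x : ℝ, 0 < Real.cosh x - Real.cos θ := fun x => by
    have := Real.one_le_cosh x; linarith
  have hpos : ∀ x : ℝ, 0 < Real.sin θ / (2 * (Real.cosh x - Real.cos θ)) := fun x =>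
    div_pos hs (by linarith [hcosh x])
  set v : ℝ → ℝ := fun x => (1 - Real.exp x * Real.cos θ) / (Real.exp x * Real.sin θ) with hv
  set g : ℝ → ℝ := fun x => Real.pi / 2 - Real.arctan (v x) with hg
  have hb : ∀ x : ℝ, 0 < Real.exp x * Real.sin θ := fun x => mul_pos (Real.exp_pos x) hs
  have hgrange : ∀ x, g x ∈ Set.Ioo 0 Real.pi := by
    intro x
    refine ⟨by have := Real.arctan_lt_pi_div_two (v x); simp only [hg]; linarith,
      by have := Real.neg_pi_div_two_lt_arctan (v x); simp only [hg]; linarith⟩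
  have hcosg : ∀ x, Real.cos (g x) = v x / Real.sqrt (1 + v x ^ 2) := by
    intro x; rw [hg]; rw [Real.cos_pi_div_two_sub, Real.sin_arctan]
  have hsing : ∀ x, Real.sin (g x) = 1 / Real.sqrt (1 + v x ^ 2) := by
    intro x; rw [hg]; rw [Real.sin_pi_div_two_sub, Real.cos_arctan]
  -- branch for g
  have hgbranch : ∀ x : ℝ,
      Complex.exp (2 * Complex.I * (g x : ℂ)) =
        (1 - Complex.exp ((x : ℂ) - (θ : ℂ) * Complex.I)) /
          (1 - Complex.exp ((x : ℂ) + (θ : ℂ) * Complex.I)) := by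
    intro x
    have hex := Real.exp_pos x
    have hw0 : (0:ℝ) < 1 + v x ^ 2 := by positivity
    have hwpos : 0 < Real.sqrt (1 + v x ^ 2) := Real.sqrt_pos.2 hw0
    have hA : 1 - Real.exp x * Real.cos θ = (Real.exp x * Real.sin θ) * v x := by
      simp only [hv]
      field_simp [(hb x).ne']
    have e2 : Complex.exp ((x : ℂ) + (θ : ℂ) * Complex.I) =
        (Real.exp x : ℂ) * ((Real.cos θ : ℂ) + (Real.sin θ : ℂ) * Complex.I) := by
      rw [Complex.exp_add, Complex.exp_mul_I, ← Complex.ofReal_exp,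
        Complex.ofReal_cos, Complex.ofReal_sin]
    have e1 : Complex.exp ((x : ℂ) - (θ : ℂ) * Complex.I) =
        (Real.exp x : ℂ) * ((Real.cos θ : ℂ) - (Real.sin θ : ℂ) * Complex.I) := by
      have harg : (x : ℂ) - (θ : ℂ) * Complex.I = (x : ℂ) + ((-θ : ℝ) : ℂ) * Complex.I := by
        push_cast; ring
      rw [harg, Complex.exp_add, Complex.exp_mul_I, ← Complex.ofReal_exp,
        ← Complex.ofReal_cos, ← Complex.ofReal_sin, Real.cos_neg, Real.sin_neg]
      push_cast; ring
    have hcos2 : Real.cos (2 * g x) = (v x ^ 2 - 1) / (1 + v x ^ 2) := by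
      rw [Real.cos_two_mul, hcosg, div_pow, Real.sq_sqrt hw0.le]
      field_simp
      ring
    have hsin2 : Real.sin (2 * g x) = 2 * v x / (1 + v x ^ 2) := by
      have hm : Real.sqrt (1 + v x ^ 2) * Real.sqrt (1 + v x ^ 2) = 1 + v x ^ 2 :=
        Real.mul_self_sqrt hw0.le
      rw [Real.sin_two_mul, hsing, hcosg, mul_assoc, div_mul_div_comm, one_mul, hm,
        mul_div_assoc]
    have hAc : ((1:ℂ) - (Real.exp x : ℂ) * (Real.cos θ : ℂ)) =
        (Real.exp x : ℂ) * (Real.sin θ : ℂ) * (v x : ℂ) := by exact_mod_cast hA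
    have hN : (1 : ℂ) - Complex.exp ((x : ℂ) - (θ : ℂ) * Complex.I) =
        ((Real.exp x * Real.sin θ : ℝ) : ℂ) * ((v x : ℂ) + Complex.I) := by
      rw [e1]; push_cast at hAc ⊢; linear_combination hAc
    have hD2 : (1 : ℂ) - Complex.exp ((x : ℂ) + (θ : ℂ) * Complex.I) =
        ((Real.exp x * Real.sin θ : ℝ) : ℂ) * ((v x : ℂ) - Complex.I) := by
      rw [e2]; push_cast at hAc ⊢; linear_combination hAc
    have hDne : (1 : ℂ) - Complex.exp ((x : ℂ) + (θ : ℂ) * Complex.I) ≠ 0 := by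
      rw [hD2]
      apply mul_ne_zero
      · exact_mod_cast (hb x).ne'
      · intro h
        simpa using congrArg Complex.im h
    have harg2 : 2 * Complex.I * ((g x : ℝ) : ℂ) = ((2 * g x : ℝ) : ℂ) * Complex.I := by
      push_cast; ring
    rw [harg2, Complex.exp_mul_I, ← Complex.ofReal_cos, ← Complex.ofReal_sin,
      hcos2, hsin2, eq_div_iff hDne, hN, hD2]
    rw [Complex.ext_iff]
    constructor
    · simp only [Complex.add_re, Complex.add_im, Complex.sub_re, Complex.sub_im,
        Complex.mul_re, Complex.mul_im, Complex.I_re, Complex.I_im,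
        Complex.ofReal_re, Complex.ofReal_im]
      field_simp
      ring
    · simp only [Complex.add_re, Complex.add_im, Complex.sub_re, Complex.sub_im,
        Complex.mul_re, Complex.mul_im, Complex.I_re, Complex.I_im,
        Complex.ofReal_re, Complex.ofReal_im]
      field_simp
      ring
  -- f = g
  have hfg : ∀ x, f x = g x := by
    intro x
    have h := (hbranch x).trans (hgbranch x).symm
    rw [Complex.exp_eq_exp_iff_exists_int] at h
    obtain ⟨n, hn⟩ := h
    have him := congrArg Complex.im hn
    simp [Complex.mul_im, Complex.add_im, Complex.mul_re] at him
    -- him : 2 * f x = 2 * g x + n * (2 * π)  (roughly)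
    have hfx := hrange x
    have hgx := hgrange x
    have hn0 : (n : ℝ) * π = f x - g x := by linarith
    have hb1 : -1 < (n : ℝ) ∧ (n : ℝ) < 1 := by
      constructor <;> nlinarith [hfx.1, hfx.2, hgx.1, hgx.2, Real.pi_pos]
    have : n = 0 := by
      have h1 : (-1 : ℤ) < n := by exact_mod_cast hb1.1
      have h2 : n < 1 := by exact_mod_cast hb1.2
      omega
    rw [this] at hn0
    simp at hn0
    linarith [hn0]
  -- derivative of g
  have hderivg : ∀ x : ℝ, HasDerivAt g (Real.sin θ / (2 * (Real.cosh x - Real.cos θ))) x := by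
    intro x
    have hb' := (hb x).ne'
    have hnum : HasDerivAt (fun y => 1 - Real.exp y * Real.cos θ)
        (-(Real.exp x * Real.cos θ)) x := by
      simpa using ((Real.hasDerivAt_exp x).mul_const (Real.cos θ)).const_sub 1
    have hden : HasDerivAt (fun y => Real.exp y * Real.sin θ) (Real.exp x * Real.sin θ) x :=
      (Real.hasDerivAt_exp x).mul_const _
    have hv' : HasDerivAt v
        ((-(Real.exp x * Real.cos θ) * (Real.exp x * Real.sin θ) -
          (1 - Real.exp x * Real.cos θ) * (Real.exp x * Real.sin θ)) /
          (Real.exp x * Real.sin θ) ^ 2) x := hnum.div hden hb'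
    have harctan : HasDerivAt (fun y => Real.arctan (v y))
        ((1 / (1 + v x ^ 2)) *
          ((-(Real.exp x * Real.cos θ) * (Real.exp x * Real.sin θ) -
            (1 - Real.exp x * Real.cos θ) * (Real.exp x * Real.sin θ)) /
            (Real.exp x * Real.sin θ) ^ 2)) x :=
      (Real.hasDerivAt_arctan (v x)).comp x hv'
    have hgd := harctan.const_sub (Real.pi / 2)
    refine hgd.congr_deriv (Eq.symm ?_)
    have hex := Real.exp_pos x
    have hcosh2 : 2 * (Real.cosh x - Real.cos θ) =
        (Real.exp x ^ 2 + 1 - 2 * Real.exp x * Real.cos θ) / Real.exp x := by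
      rw [Real.cosh_eq, Real.exp_neg]
      field_simp
    rw [hcosh2, hv]
    have h1 : (0:ℝ) < Real.exp x ^ 2 + 1 - 2 * Real.exp x * Real.cos θ := by
      nlinarith [Real.sin_sq_add_cos_sq θ, sq_nonneg (Real.exp x - Real.cos θ)]
    simp only []
    field_simp [h1.ne']
    rw [div_eq_iff (ne_of_gt (by linarith : (0:ℝ) < Real.exp x ^ 2 + 1 - Real.exp x * 2 * Real.cos θ))]
    linear_combination (Real.exp x ^ 2) * (Real.sin_sq_add_cos_sq θ)
  have hfg' : f = g := funext hfg
  refine ⟨fun x => hfg' ▸ hderivg x, hpos, ?_⟩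
  apply strictMono_of_deriv_pos
  intro x
  rw [hfg', (hderivg x).deriv]
  exact hpos x
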